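/- Let I be a monomial ideal whose polarization P(I) is the facet ideal of a simplicial tree. Then for any prime ideal p containing I, the polarization P(I_p) of the localization is the facet ideal of a simplicial forest. -/
import Mathlib


open MvPolynomial

/-- The monomial `x_1^{a_1} ⋯ x_n^{a_n}` with exponent vector `a`. -/
noncomputable def mon (k : Type) [Field k] {n : ℕ} (a : Fin n → ℕ) :
    MvPolynomial (Fin n) k :=
  ∏ i, X i ^ a i

/-- The polarization of the monomial with exponent vector `a`: the square-free monomial
`∏_i ∏_{j < a_i} x_{i,j}` in the doubly-indexed variables `x_{i,j}`, `0 ≤ j ≤ m`. -/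
noncomputable def polar (k : Type) [Field k] (m : ℕ) {n : ℕ} (a : Fin n → ℕ) :
    MvPolynomial (Fin n × Fin (m + 1)) k :=
  ∏ i, ∏ j ∈ Finset.univ.filter fun j : Fin (m + 1) => (j : ℕ) < a i, X (i, j)


/-- The monomial ideal generated by the monomials with exponent vectors `A t`. -/
noncomputable def monIdeal (k : Type) [Field k] {n q : ℕ} (A : Fin q → Fin n → ℕ) :
    Ideal (MvPolynomial (Fin n) k) :=
  Ideal.span (Set.range fun t => mon k (A t))

/-- The polarization of the monomial ideal generated by the monomials `A t`:
the square-free monomial ideal generated by the polarizations of the generators. -/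
noncomputable def polarIdeal (k : Type) [Field k] (m : ℕ) {n q : ℕ}
    (A : Fin q → Fin n → ℕ) : Ideal (MvPolynomial (Fin n × Fin (m + 1)) k) :=
  Ideal.span (Set.range fun t => polar k m (A t))


/-- The vertex support of the polarization of the monomial with exponent vector `a`:
the facet `{(i,j) | j < a_i}` on the vertex set of doubly-indexed variables. -/
def suppF (m : ℕ) {n : ℕ} (a : Fin n → ℕ) : Finset (Fin n × Fin (m + 1)) :=
  Finset.univ.filter fun v => (v.2 : ℕ) < a v.1

/-- `F` is a leaf of the simplicial complex with facet set `Δ`: either `F` is the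
only facet, or there is another facet `G` containing `F ∩ (Δ ∖ F)`. -/
def IsLeaf {V : Type} [DecidableEq V] (Δ : Finset (Finset V)) (F : Finset V) : Prop :=
  F ∈ Δ ∧ (Δ = {F} ∨ ∃ G ∈ Δ.erase F, ∀ H ∈ Δ.erase F, F ∩ H ⊆ G)

/-- A simplicial complex (given by its facet set) is a forest if every nonempty
subcollection has a leaf. -/
def IsForest {V : Type} [DecidableEq V] (Δ : Finset (Finset V)) : Prop :=
  ∀ Γ ⊆ Δ, Γ.Nonempty → ∃ F, IsLeaf Γ F

/-- A tree is a connected forest: connectivity is expressed by chains of facets with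
consecutive nonempty intersections. -/
def IsTree {V : Type} [DecidableEq V] (Δ : Finset (Finset V)) : Prop :=
  IsForest Δ ∧ ∀ F ∈ Δ, ∀ G ∈ Δ,
    Relation.ReflTransGen (fun a b : Finset V => a ∈ Δ ∧ b ∈ Δ ∧ (a ∩ b).Nonempty) F G

/-- The facet complex of the polarization `𝒫(I)` of the monomial ideal with
exponent vectors `A`. -/
def facetComplex (m : ℕ) {n q : ℕ} (A : Fin q → Fin n → ℕ) :
    Finset (Finset (Fin n × Fin (m + 1))) :=
  Finset.image (fun t => suppF m (A t)) Finset.univ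

open Classical in
/-- if `𝒫(I)` is the facet ideal of a simplicial tree, then for any
prime `p ⊇ I`, the polarization of the localization `I_p` (obtained by deleting from
the generators the variables not in `p`) is the facet ideal of a forest (its facets
being the minimal supports among the polarized localized generators). -/
theorem polar_localization_forest (k : Type) [Field k] (m n q : ℕ)
    (A : Fin q → Fin n → ℕ) (hA : ∀ t i, A t i ≤ m + 1)
    (hmin : ∀ t t', suppF m (A t) ⊆ suppF m (A t') → t = t')
    (hTree : IsTree (facetComplex m A))
    (p : Ideal (MvPolynomial (Fin n) k)) (hp : p.IsPrime) (hIp : monIdeal k A ≤ p) :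
    IsForest ((Finset.image (fun t => suppF m (fun i =>
        if (X i : MvPolynomial (Fin n) k) ∈ p then A t i else 0)) Finset.univ).filter
      fun F => ∀ G ∈ Finset.image (fun t => suppF m (fun i =>
          if (X i : MvPolynomial (Fin n) k) ∈ p then A t i else 0)) Finset.univ,
        G ⊆ F → G = F) := by
  classical
  set S : Finset (Fin n × Fin (m + 1)) :=
    Finset.univ.filter (fun v => (X v.1 : MvPolynomial (Fin n) k) ∈ p) with hS
  have hloc : ∀ t : Fin q, suppF m (fun i =>
      if (X i : MvPolynomial (Fin n) k) ∈ p then A t i else 0)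
      = suppF m (A t) ∩ S := by
    intro t
    ext v
    simp only [suppF, hS, Finset.mem_filter, Finset.mem_inter, Finset.mem_univ, true_and]
    by_cases h : (X v.1 : MvPolynomial (Fin n) k) ∈ p
    · simp [h]
    · simp [h]
  intro Γ hΓsub hΓne
  have hΓ' : ∀ γ ∈ Γ, ∃ t : Fin q, suppF m (A t) ∩ S = γ := by
    intro γ hγ
    have hmem := hΓsub hγ
    rw [Finset.mem_filter] at hmem
    obtain ⟨t, -, ht⟩ := Finset.mem_image.mp hmem.1
    exact ⟨t, by rw [← hloc]; exact ht⟩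
  -- choose an original facet index for each localized facet in Γ
  let r : {γ // γ ∈ Γ} → Fin q := fun γ => (hΓ' γ.1 γ.2).choose
  have hr : ∀ γ : {γ // γ ∈ Γ}, suppF m (A (r γ)) ∩ S = γ.1 :=
    fun γ => (hΓ' γ.1 γ.2).choose_spec
  set Γ' : Finset (Finset (Fin n × Fin (m + 1))) :=
    Γ.attach.image (fun γ => suppF m (A (r γ))) with hΓ'def
  have hΓ'sub : Γ' ⊆ facetComplex m A := by
    intro F hF
    obtain ⟨γ, -, hγ⟩ := Finset.mem_image.mp hF
    exact Finset.mem_image.mpr ⟨r γ, Finset.mem_univ _, hγ⟩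
  have hΓ'ne : Γ'.Nonempty := by
    obtain ⟨γ, hγ⟩ := hΓne
    exact ⟨_, Finset.mem_image.mpr ⟨⟨γ, hγ⟩, Finset.mem_attach _ _, rfl⟩⟩
  obtain ⟨F, hFmem, hFleaf⟩ := hTree.1 Γ' hΓ'sub hΓ'ne
  obtain ⟨γ₀, -, hγ₀⟩ := Finset.mem_image.mp hFmem
  have hγ₀S : F ∩ S = γ₀.1 := by rw [← hγ₀]; exact hr γ₀
  refine ⟨γ₀.1, γ₀.2, ?_⟩
  rcases hFleaf with hsingle | ⟨G, hG, hGjoint⟩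
  · left
    apply Finset.eq_singleton_iff_unique_mem.mpr
    refine ⟨γ₀.2, ?_⟩
    intro γ hγ
    have himg : suppF m (A (r ⟨γ, hγ⟩)) ∈ Γ' :=
      Finset.mem_image.mpr ⟨⟨γ, hγ⟩, Finset.mem_attach _ _, rfl⟩
    rw [hsingle, Finset.mem_singleton] at himg
    calc γ = suppF m (A (r ⟨γ, hγ⟩)) ∩ S := (hr ⟨γ, hγ⟩).symm
      _ = F ∩ S := by rw [himg]
      _ = γ₀.1 := hγ₀S
  · right
    obtain ⟨hGne, hGmem⟩ := Finset.mem_erase.mp hG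
    obtain ⟨γ₁, -, hγ₁⟩ := Finset.mem_image.mp hGmem
    have hγ₁S : G ∩ S = γ₁.1 := by rw [← hγ₁]; exact hr γ₁
    refine ⟨γ₁.1, ?_, ?_⟩
    · refine Finset.mem_erase.mpr ⟨?_, γ₁.2⟩
      intro hcontra
      apply hGne
      have : γ₁ = γ₀ := Subtype.ext hcontra
      rw [← hγ₁, this, hγ₀]
    · intro H hH
      obtain ⟨hHne, hHmem⟩ := Finset.mem_erase.mp hH
      have hHS : suppF m (A (r ⟨H, hHmem⟩)) ∩ S = H := hr ⟨H, hHmem⟩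
      have himg : suppF m (A (r ⟨H, hHmem⟩)) ∈ Γ' :=
        Finset.mem_image.mpr ⟨⟨H, hHmem⟩, Finset.mem_attach _ _, rfl⟩
      have hFH : suppF m (A (r ⟨H, hHmem⟩)) ≠ F := by
        intro hcontra
        apply hHne
        rw [← hHS, hcontra, hγ₀S]
      have hjoint : F ∩ suppF m (A (r ⟨H, hHmem⟩)) ⊆ G :=
        hGjoint _ (Finset.mem_erase.mpr ⟨hFH, himg⟩)
      intro v hv
      rw [← hγ₀S, ← hHS] at hv
      rw [← hγ₁S]
      simp only [Finset.mem_inter] at hv ⊢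
      exact ⟨hjoint (Finset.mem_inter.mpr ⟨hv.1.1, hv.2.1⟩), hv.1.2⟩
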